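/- With the setup of the Birkhoff decomposition (K = K₋ ⊕ K₊ with T the projection onto K₋ being a Rota–Baxter operator of weight -1, i.e. T(a)T(b) = T(T(a)b + aT(b) - ab)), the map φ₋ defined recursively by φ₋(X) = -T(φ(X) + Σ φ₋(X')φ(X'')) is an algebra homomorphism from H to k·1 + K₋. -/

import Mathlib

open TensorProduct

/-- The image of `p ⊗ q` inside `H ⊗ H`, for submodules `p q : Submodule k H`. -/
noncomputable def subTmul {k H : Type*} [CommRing k] [AddCommGroup H] [Module k H]
    (p q : Submodule k H) : Submodule k (H ⊗[k] H) :=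
  LinearMap.range (TensorProduct.mapIncl p q)

/-- Convolution product of linear maps from a coalgebra to an algebra. -/
noncomputable def conv {k H A : Type*} [CommRing k] [AddCommGroup H] [Module k H]
    [Coalgebra k H] [Ring A] [Algebra k A] (f g : H →ₗ[k] A) : H →ₗ[k] A :=
  LinearMap.mul' k A ∘ₗ TensorProduct.map f g ∘ₗ Coalgebra.comul

theorem subTmul_induction {k H : Type*} [CommRing k] [AddCommGroup H] [Module k H]
    (V W : Submodule k H) {C : H ⊗[k] H → Prop} {t : H ⊗[k] H} (ht : t ∈ subTmul V W)
    (h0 : C 0) (htmul : ∀ a ∈ V, ∀ b ∈ W, C (a ⊗ₜ[k] b))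
    (hadd : ∀ s u, C s → C u → C (s + u)) : C t := by
  obtain ⟨s, rfl⟩ := ht
  induction s using TensorProduct.induction_on with
  | zero => simpa using h0
  | tmul a b => simpa [TensorProduct.mapIncl] using htmul a a.2 b b.2
  | add s u hs hu => rw [map_add]; exact hadd _ _ hs hu

theorem mem_subTmul_one_left {k H : Type*} [CommRing k] [AddCommGroup H] [Module k H]
    (u : H) (W : Submodule k H) {t : H ⊗[k] H}
    (ht : t ∈ subTmul (Submodule.span k {u}) W) : ∃ w ∈ W, t = u ⊗ₜ[k] w := by
  refine subTmul_induction _ _ (C := fun t => ∃ w ∈ W, t = u ⊗ₜ[k] w) ht ⟨0, W.zero_mem, by simp⟩ ?_ ?_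
  · intro a ha b hb
    obtain ⟨c, rfl⟩ := Submodule.mem_span_singleton.mp ha
    exact ⟨c • b, W.smul_mem _ hb, (TensorProduct.smul_tmul c u b)⟩
  · rintro s t' ⟨w1, hw1, rfl⟩ ⟨w2, hw2, rfl⟩
    exact ⟨w1 + w2, W.add_mem hw1 hw2, (TensorProduct.tmul_add u w1 w2).symm⟩

theorem mem_subTmul_one_right {k H : Type*} [CommRing k] [AddCommGroup H] [Module k H]
    (u : H) (V : Submodule k H) {t : H ⊗[k] H}
    (ht : t ∈ subTmul V (Submodule.span k {u})) : ∃ w ∈ V, t = w ⊗ₜ[k] u := by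
  refine subTmul_induction _ _ (C := fun t => ∃ w ∈ V, t = w ⊗ₜ[k] u) ht ⟨0, V.zero_mem, by simp⟩ ?_ ?_
  · intro a ha b hb
    obtain ⟨c, rfl⟩ := Submodule.mem_span_singleton.mp hb
    exact ⟨c • a, V.smul_mem _ ha, by rw [TensorProduct.tmul_smul, TensorProduct.smul_tmul']⟩
  · rintro s t' ⟨w1, hw1, rfl⟩ ⟨w2, hw2, rfl⟩
    exact ⟨w1 + w2, V.add_mem hw1 hw2, (TensorProduct.add_tmul w1 w2 u).symm⟩

noncomputable def Rsub {k H : Type*} [CommRing k] [AddCommGroup H] [Module k H]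
    (ℬ : ℕ → Submodule k H) (n : ℕ) : Submodule k (H ⊗[k] H) :=
  ⨆ p : {p : ℕ × ℕ // p.1 + p.2 = n ∧ 1 ≤ p.1 ∧ 1 ≤ p.2}, subTmul (ℬ p.1.1) (ℬ p.1.2)

theorem aux_struct {k H : Type*} [Field k] [CommRing H] [HopfAlgebra k H]
    (ℬ : ℕ → Submodule k H)
    (hconn : ℬ 0 = Submodule.span k {(1 : H)})
    (hgraded : ∀ n, ∀ x ∈ ℬ n,
      (Coalgebra.comul (R := k) x : H ⊗[k] H) ∈
        ⨆ p : {p : ℕ × ℕ // p.1 + p.2 = n}, subTmul (ℬ p.1.1) (ℬ p.1.2))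
    (compo : ℕ → H →ₗ[k] H)
    (hcm : ∀ i x, x ∈ ℬ i → compo i x = x)
    (hcn : ∀ i j x, x ∈ ℬ i → i ≠ j → compo j x = 0)
    (hone : (1 : H) ≠ 0) :
    ∀ n, 1 ≤ n → ∀ x ∈ ℬ n, Coalgebra.counit (R := k) x = 0 ∧
      (Coalgebra.comul (R := k) x - x ⊗ₜ[k] (1:H) - (1:H) ⊗ₜ[k] x) ∈ Rsub ℬ n := by
  classical
  intro n hn x hx
  obtain ⟨f, hf, hsum⟩ := (Submodule.mem_iSup_iff_exists_finsupp _ _).mp (hgraded n x hx)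
  obtain ⟨i0, hi0c⟩ : ∃ i : {p : ℕ × ℕ // p.1 + p.2 = n}, i.1 = (0, n) := ⟨⟨(0,n), by simp⟩, rfl⟩
  obtain ⟨i1, hi1c⟩ : ∃ i : {p : ℕ × ℕ // p.1 + p.2 = n}, i.1 = (n, 0) := ⟨⟨(n,0), by simp⟩, rfl⟩
  have hi01 : i0.1.1 = 0 := by rw [hi0c]
  have hi02 : i0.1.2 = n := by rw [hi0c]
  have hi11 : i1.1.1 = n := by rw [hi1c]
  have hi12 : i1.1.2 = 0 := by rw [hi1c]
  have hne : i0 ≠ i1 := by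
    intro h
    rw [h] at hi01
    omega
  -- extract edge terms
  have hf0 : f i0 ∈ subTmul (Submodule.span k {(1:H)}) (ℬ n) := by
    have := hf i0; rwa [hi01, hi02, hconn] at this
  have hf1 : f i1 ∈ subTmul (ℬ n) (Submodule.span k {(1:H)}) := by
    have := hf i1; rwa [hi11, hi12, hconn] at this
  obtain ⟨z, hz, hz'⟩ := mem_subTmul_one_left _ _ hf0
  obtain ⟨w, hw, hw'⟩ := mem_subTmul_one_right _ _ hf1
  -- sum decomposition
  set s : Finset {p : ℕ × ℕ // p.1 + p.2 = n} := f.support ∪ {i0, i1} with hs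
  have hmem0 : i0 ∈ s := by simp [hs]
  have hmem1 : i1 ∈ (s.erase i0) := Finset.mem_erase.mpr ⟨hne.symm, by simp [hs]⟩
  set s2 : Finset {p : ℕ × ℕ // p.1 + p.2 = n} := (s.erase i0).erase i1 with hs2
  have hsum' : Coalgebra.comul (R := k) x
      = (1:H) ⊗ₜ[k] z + w ⊗ₜ[k] (1:H) + ∑ i ∈ s2, f i := by
    rw [← hz', ← hw', ← hsum, Finsupp.sum]
    rw [Finset.sum_subset (Finset.subset_union_left (s₂ := ({i0, i1} : Finset _)))
      (fun i _ hi => Finsupp.notMem_support_iff.mp hi)]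
    rw [← Finset.add_sum_erase _ _ hmem0, ← Finset.add_sum_erase _ _ hmem1]
    ring
  have hmid : ∀ i ∈ s2, 1 ≤ i.1.1 ∧ 1 ≤ i.1.2 := by
    intro i hi
    have h1 : i ≠ i1 := (Finset.mem_erase.mp hi).1
    have h0 : i ≠ i0 := (Finset.mem_erase.mp (Finset.mem_erase.mp hi).2).1
    have hin : i.1.1 + i.1.2 = n := i.2
    constructor
    · by_contra h
      refine h0 (Subtype.ext ?_)
      rw [hi0c]
      exact Prod.ext (by omega) (by omega)
    · by_contra h
      refine h1 (Subtype.ext ?_)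
      rw [hi1c]
      exact Prod.ext (by omega) (by omega)
  -- the two partial counit maps
  set ρR : H ⊗[k] H →ₗ[k] H :=
    (TensorProduct.lid k H).toLinearMap ∘ₗ LinearMap.rTensor H (Coalgebra.counit (R:=k)) with hρR
  set ρL : H ⊗[k] H →ₗ[k] H :=
    (TensorProduct.rid k H).toLinearMap ∘ₗ LinearMap.lTensor H (Coalgebra.counit (R:=k)) with hρL
  have hρRt : ∀ a b : H, ρR (a ⊗ₜ[k] b) = Coalgebra.counit (R:=k) a • b := by
    intro a b; simp [hρR]
  have hρLt : ∀ a b : H, ρL (a ⊗ₜ[k] b) = Coalgebra.counit (R:=k) b • a := by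
    intro a b; simp [hρL]
  have hρRc : ρR (Coalgebra.comul (R:=k) x) = x := by
    simp [hρR, Coalgebra.rTensor_counit_comul]
  have hρLc : ρL (Coalgebra.comul (R:=k) x) = x := by
    simp [hρL, Coalgebra.lTensor_counit_comul]
  have hεone : Coalgebra.counit (R := k) (1:H) = 1 := Bialgebra.counit_one
  have h1B0 : (1:H) ∈ ℬ 0 := by rw [hconn]; exact Submodule.mem_span_singleton_self _
  -- ρR equation
  have heqR := congrArg ρR hsum'
  rw [hρRc] at heqR
  simp only [map_add, map_sum] at heqR
  rw [hρRt 1 z, hρRt w 1, hεone, one_smul] at heqR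
  -- ρL equation
  have heqL := congrArg ρL hsum'
  rw [hρLc] at heqL
  simp only [map_add, map_sum] at heqL
  rw [hρLt 1 z, hρLt w 1, hεone, one_smul] at heqL
  have hρRm : ∀ i ∈ s2, ρR (f i) ∈ ℬ i.1.2 := by
    intro i _
    refine subTmul_induction _ _ (C := fun t => ρR t ∈ ℬ i.1.2) (hf i) (by simp) ?_ ?_
    · intro a _ b hb; rw [hρRt]; exact Submodule.smul_mem _ _ hb
    · intro a b ha hb; rw [map_add]; exact Submodule.add_mem _ ha hb
  have hρLm : ∀ i ∈ s2, ρL (f i) ∈ ℬ i.1.1 := by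
    intro i _
    refine subTmul_induction _ _ (C := fun t => ρL t ∈ ℬ i.1.1) (hf i) (by simp) ?_ ?_
    · intro a ha b _; rw [hρLt]; exact Submodule.smul_mem _ _ ha
    · intro a b ha hb; rw [map_add]; exact Submodule.add_mem _ ha hb
  -- apply compo n to heqR : get z = x
  have hzx : z = x := by
    have h := congrArg (compo n) heqR
    simp only [map_add, map_smul, map_sum] at h
    rw [hcm n x hx, hcm n z hz, hcn 0 n 1 h1B0 (by omega),
      Finset.sum_eq_zero (fun i hi => hcn i.1.2 n _ (hρRm i hi)
        (by have h2 := hmid i hi; have h3 : i.1.1 + i.1.2 = n := i.2; omega))] at h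
    simpa using h.symm
  have hwx : w = x := by
    have h := congrArg (compo n) heqL
    simp only [map_add, map_smul, map_sum] at h
    rw [hcm n x hx, hcm n w hw, hcn 0 n 1 h1B0 (by omega),
      Finset.sum_eq_zero (fun i hi => hcn i.1.1 n _ (hρLm i hi)
        (by have h2 := hmid i hi; have h3 : i.1.1 + i.1.2 = n := i.2; omega))] at h
    simpa using h.symm
  -- apply compo 0 to heqR : counit w = 0
  have hεx : Coalgebra.counit (R := k) x = 0 := by
    have h := congrArg (compo 0) heqR
    simp only [map_add, map_smul, map_sum] at h
    rw [hcn n 0 x hx (by omega), hcn n 0 z hz (by omega), hcm 0 1 h1B0,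
      Finset.sum_eq_zero (fun i hi => hcn i.1.2 0 _ (hρRm i hi)
        (by have h2 := hmid i hi; omega))] at h
    simp only [smul_zero, add_zero, zero_add] at h
    have h0 : Coalgebra.counit (R:=k) w • (1:H) = 0 := h.symm
    rcases smul_eq_zero.mp h0 with hc | hc
    · rw [← hwx]; exact hc
    · exact absurd hc hone
  refine ⟨hεx, ?_⟩
  have hrest : Coalgebra.comul (R := k) x - x ⊗ₜ[k] (1:H) - (1:H) ⊗ₜ[k] x = ∑ i ∈ s2, f i := by
    rw [hsum', hzx, hwx]; ring
  rw [hrest]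
  refine Submodule.sum_mem _ (fun i hi => ?_)
  have hm := hmid i hi
  exact Submodule.mem_iSup_of_mem (ι := {p : ℕ × ℕ // p.1 + p.2 = n ∧ 1 ≤ p.1 ∧ 1 ≤ p.2})
    ⟨i.1, i.2, hm.1, hm.2⟩ (hf i)

theorem aux_key {k H K : Type*} [Field k] [CommRing H] [HopfAlgebra k H]
    [CommRing K] [Algebra k K]
    (ℬ : ℕ → Submodule k H)
    (hconn : ℬ 0 = Submodule.span k {(1 : H)})
    (T : K →ₗ[k] K)
    (hRB : ∀ a b : K, T a * T b = T (T a * b + a * T b - a * b))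
    (φ : H →ₐ[k] K)
    (φm : H →ₗ[k] K)
    (hφm1 : φm (1 : H) = 1)
    (Ψ : H ⊗[k] H →ₗ[k] K)
    (hΨt : ∀ a b : H, Ψ (a ⊗ₜ[k] b) = φm a * φ b)
    (hΨrec : ∀ x : H, Coalgebra.counit (R := k) x = 0 →
      φm x = -T (φ x + Ψ (Coalgebra.comul (R := k) x - x ⊗ₜ[k] (1 : H) - (1 : H) ⊗ₜ[k] x)))
    (hstruct : ∀ n, 1 ≤ n → ∀ x ∈ ℬ n, Coalgebra.counit (R := k) x = 0 ∧
      (Coalgebra.comul (R := k) x - x ⊗ₜ[k] (1:H) - (1:H) ⊗ₜ[k] x) ∈ Rsub ℬ n) :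
    ∀ n p q (x y : H), p + q = n → x ∈ ℬ p → y ∈ ℬ q → φm (x * y) = φm x * φm y := by
  -- helper 2 (no induction hypothesis needed)
  have hH2 : ∀ (u : H) (W : H ⊗[k] H), Ψ ((1 ⊗ₜ[k] u) * W) = φ u * Ψ W := by
    intro u W
    induction W using TensorProduct.induction_on with
    | zero => simp
    | tmul a b =>
      rw [Algebra.TensorProduct.tmul_mul_tmul, hΨt, hΨt, one_mul, map_mul]; ring
    | add s t hs ht => rw [mul_add, map_add, map_add, hs, ht, mul_add]
  intro n
  induction n using Nat.strong_induction_on with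
  | _ n IH =>
  intro p q x y hpq hx hy
  -- trivial cases: degree-0 factors
  rcases Nat.eq_zero_or_pos p with hp | hp
  · subst hp
    rw [hconn] at hx
    obtain ⟨c, rfl⟩ := Submodule.mem_span_singleton.mp hx
    rw [smul_mul_assoc, one_mul, map_smul, map_smul, hφm1, smul_mul_assoc, one_mul]
  rcases Nat.eq_zero_or_pos q with hq | hq
  · subst hq
    rw [hconn] at hy
    obtain ⟨c, rfl⟩ := Submodule.mem_span_singleton.mp hy
    rw [mul_smul_comm, mul_one, map_smul, map_smul, hφm1, mul_smul_comm, mul_one]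
  -- helper 1
  have hH1 : ∀ p' m (u : H) (W : H ⊗[k] H), p' + m ≤ n → u ∈ ℬ p' → W ∈ Rsub ℬ m →
      Ψ ((u ⊗ₜ[k] 1) * W) = φm u * Ψ W := by
    intro p' m u W hpm hu hW
    refine Submodule.iSup_induction _ (motive := fun W => Ψ ((u ⊗ₜ[k] (1:H)) * W) = φm u * Ψ W)
      hW ?_ (by simp) ?_
    · rintro ⟨⟨a', b'⟩, hab, ha', hb'⟩ t ht
      refine subTmul_induction _ _ (C := fun t => Ψ ((u ⊗ₜ[k] (1:H)) * t) = φm u * Ψ t)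
        ht (by simp) ?_ ?_
      · intro a ha b hb
        rw [Algebra.TensorProduct.tmul_mul_tmul, one_mul, hΨt, hΨt,
          IH (p' + a') (by omega) p' a' u a rfl hu ha, mul_assoc]
      · intro s t hs ht; rw [mul_add, map_add, hs, ht, map_add, mul_add]
    · intro s t hs ht; rw [mul_add, map_add, hs, ht, map_add, mul_add]
  -- helper 3
  have hH3 : ∀ pX pY (X Y : H ⊗[k] H), pX + pY ≤ n + 1 → X ∈ Rsub ℬ pX → Y ∈ Rsub ℬ pY →
      Ψ (X * Y) = Ψ X * Ψ Y := by
    intro pX pY X Y hpq' hX hY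
    refine Submodule.iSup_induction _
      (motive := fun X => Ψ (X * Y) = Ψ X * Ψ Y) hX ?_ (by simp) ?_
    · rintro ⟨⟨a', b'⟩, hab, ha', hb'⟩ t ht
      refine subTmul_induction _ _ (C := fun t => Ψ (t * Y) = Ψ t * Ψ Y) ht (by simp) ?_ ?_
      · intro a ha b hb
        refine Submodule.iSup_induction _
          (motive := fun Y => Ψ ((a ⊗ₜ[k] b) * Y) = Ψ (a ⊗ₜ[k] b) * Ψ Y) hY ?_ (by simp) ?_
        · rintro ⟨⟨c', d'⟩, hcd, hc', hd'⟩ t' ht'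
          refine subTmul_induction _ _
            (C := fun t' => Ψ ((a ⊗ₜ[k] b) * t') = Ψ (a ⊗ₜ[k] b) * Ψ t') ht' (by simp) ?_ ?_
          · intro c hc d hd
            rw [Algebra.TensorProduct.tmul_mul_tmul, hΨt, hΨt, hΨt,
              IH (a' + c') (by omega) a' c' a c rfl ha hc, map_mul]
            ring
          · intro s t hs ht; rw [mul_add, map_add, hs, ht, map_add, mul_add]
        · intro s t hs ht; rw [mul_add, map_add, hs, ht, map_add, mul_add]
      · intro s t hs ht; rw [add_mul, map_add, hs, ht, map_add, add_mul]
    · intro s t hs ht; rw [add_mul, map_add, hs, ht, map_add, add_mul]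
  -- main computation
  obtain ⟨hεx, hX⟩ := hstruct p hp x hx
  obtain ⟨hεy, hY⟩ := hstruct q hq y hy
  have hεxy : Coalgebra.counit (R := k) (x * y) = 0 := by
    rw [Bialgebra.counit_mul, hεx, zero_mul]
  have hmx := hΨrec x hεx
  have hmy := hΨrec y hεy
  have hmxy := hΨrec (x * y) hεxy
  have hTx : T (φ x + Ψ (Coalgebra.comul (R := k) x - x ⊗ₜ[k] (1:H) - (1:H) ⊗ₜ[k] x))
      = -φm x := by rw [hmx, neg_neg]
  have hTy : T (φ y + Ψ (Coalgebra.comul (R := k) y - y ⊗ₜ[k] (1:H) - (1:H) ⊗ₜ[k] y))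
      = -φm y := by rw [hmy, neg_neg]
  have hΔxy : Coalgebra.comul (R := k) (x*y) - (x*y) ⊗ₜ[k] (1:H) - (1:H) ⊗ₜ[k] (x*y)
      = x ⊗ₜ[k] y + y ⊗ₜ[k] x
        + (x ⊗ₜ[k] (1:H)) * (Coalgebra.comul (R := k) y - y ⊗ₜ[k] (1:H) - (1:H) ⊗ₜ[k] y)
        + ((1:H) ⊗ₜ[k] x) * (Coalgebra.comul (R := k) y - y ⊗ₜ[k] (1:H) - (1:H) ⊗ₜ[k] y)
        + (y ⊗ₜ[k] (1:H)) * (Coalgebra.comul (R := k) x - x ⊗ₜ[k] (1:H) - (1:H) ⊗ₜ[k] x)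
        + ((1:H) ⊗ₜ[k] y) * (Coalgebra.comul (R := k) x - x ⊗ₜ[k] (1:H) - (1:H) ⊗ₜ[k] x)
        + (Coalgebra.comul (R := k) x - x ⊗ₜ[k] (1:H) - (1:H) ⊗ₜ[k] x)
          * (Coalgebra.comul (R := k) y - y ⊗ₜ[k] (1:H) - (1:H) ⊗ₜ[k] y) := by
    have hc : Coalgebra.comul (R := k) (x * y)
        = Coalgebra.comul (R := k) x * Coalgebra.comul (R := k) y := Bialgebra.comul_mul x y
    rw [hc]
    have e1 : Coalgebra.comul (R := k) x
        = x ⊗ₜ[k] (1:H) + (1:H) ⊗ₜ[k] x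
          + (Coalgebra.comul (R := k) x - x ⊗ₜ[k] (1:H) - (1:H) ⊗ₜ[k] x) := by ring
    have e2 : Coalgebra.comul (R := k) y
        = y ⊗ₜ[k] (1:H) + (1:H) ⊗ₜ[k] y
          + (Coalgebra.comul (R := k) y - y ⊗ₜ[k] (1:H) - (1:H) ⊗ₜ[k] y) := by ring
    rw [e1, e2]
    simp only [add_mul, mul_add, Algebra.TensorProduct.tmul_mul_tmul, mul_one, one_mul]
    ring
  have harg : -(φ (x*y) + Ψ (Coalgebra.comul (R := k) (x*y) - (x*y) ⊗ₜ[k] (1:H)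
        - (1:H) ⊗ₜ[k] (x*y)))
      = T (φ x + Ψ (Coalgebra.comul (R := k) x - x ⊗ₜ[k] (1:H) - (1:H) ⊗ₜ[k] x))
          * (φ y + Ψ (Coalgebra.comul (R := k) y - y ⊗ₜ[k] (1:H) - (1:H) ⊗ₜ[k] y))
        + (φ x + Ψ (Coalgebra.comul (R := k) x - x ⊗ₜ[k] (1:H) - (1:H) ⊗ₜ[k] x))
          * T (φ y + Ψ (Coalgebra.comul (R := k) y - y ⊗ₜ[k] (1:H) - (1:H) ⊗ₜ[k] y))
        - (φ x + Ψ (Coalgebra.comul (R := k) x - x ⊗ₜ[k] (1:H) - (1:H) ⊗ₜ[k] x))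
          * (φ y + Ψ (Coalgebra.comul (R := k) y - y ⊗ₜ[k] (1:H) - (1:H) ⊗ₜ[k] y)) := by
    rw [hΔxy, hTx, hTy]
    simp only [map_add]
    rw [hΨt x y, hΨt y x, hH1 p q x _ (by omega) hx hY, hH2 x _, hH1 q p y _ (by omega) hy hX,
      hH2 y _, hH3 p q _ _ (by omega) hX hY, map_mul]
    ring
  rw [hmxy, ← map_neg, harg, ← hRB, hTx, hTy, neg_mul_neg]


/-- If the projection `T` onto `K₋` is a Rota–Baxter operator of
weight `-1` (i.e. `T(a)T(b) = T(T(a)b + aT(b) - ab)`), then the map `φ₋` defined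
recursively by `φ₋(X) = -T(φ(X) + Σ φ₋(X')φ(X''))` is an algebra homomorphism
from `H` to `k·1 + K₋`. -/
theorem birkhoff_negative_part_is_character
    {k H K : Type*} [Field k] [CommRing H] [HopfAlgebra k H]
    [CommRing K] [Algebra k K]
    (ℬ : ℕ → Submodule k H)
    (hinternal : DirectSum.IsInternal ℬ)
    (hconn : ℬ 0 = Submodule.span k {(1 : H)})
    (hgraded : ∀ n, ∀ x ∈ ℬ n,
      (Coalgebra.comul (R := k) x : H ⊗[k] H) ∈
        ⨆ p : {p : ℕ × ℕ // p.1 + p.2 = n}, subTmul (ℬ p.1.1) (ℬ p.1.2))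
    (T : K →ₗ[k] K)
    (hT : T ∘ₗ T = T)
    (hKneg : ∀ a ∈ LinearMap.range T, ∀ b ∈ LinearMap.range T, a * b ∈ LinearMap.range T)
    (hKpos : ∀ a ∈ LinearMap.ker T, ∀ b ∈ LinearMap.ker T, a * b ∈ LinearMap.ker T)
    (hT1 : T (1 : K) = 0)
    (hRB : ∀ a b : K, T a * T b = T (T a * b + a * T b - a * b))
    (φ : H →ₐ[k] K)
    (φm : H →ₗ[k] K)
    (hφm1 : φm (1 : H) = 1)
    (hrec : ∀ x ∈ LinearMap.ker (Coalgebra.counit (R := k) (A := H)),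
      φm x = -T (φ x + LinearMap.mul' k K
        ((TensorProduct.map φm φ.toLinearMap)
          (Coalgebra.comul (R := k) x - x ⊗ₜ[k] (1 : H) - (1 : H) ⊗ₜ[k] x)))) :
    (∀ x y : H, φm (x * y) = φm x * φm y) ∧
    (∀ x : H, φm x ∈ Submodule.span k {(1 : K)} ⊔ LinearMap.range T) := by
  classical
  -- trivial case : H is the zero ring
  by_cases htriv : (1 : H) = 0
  · have hK0 : (1 : K) = 0 := by rw [← hφm1, htriv, map_zero]
    have : Subsingleton K := subsingleton_of_zero_eq_one hK0.symm
    refine ⟨fun x y => Subsingleton.elim _ _, fun x => ?_⟩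
    rw [Subsingleton.elim (φm x) 0]
    exact Submodule.zero_mem _
  -- the graded projections
  obtain ⟨compo, hcm, hcn⟩ : ∃ compo : ℕ → H →ₗ[k] H,
      (∀ i x, x ∈ ℬ i → compo i x = x) ∧ (∀ i j x, x ∈ ℬ i → i ≠ j → compo j x = 0) := by
    refine ⟨fun n => (ℬ n).subtype ∘ₗ (DirectSum.component k ℕ (fun i => ↥(ℬ i)) n) ∘ₗ
      (LinearEquiv.ofBijective (DirectSum.coeLinearMap ℬ) hinternal).symm.toLinearMap, ?_, ?_⟩
    · intro i x hx
      simp only [LinearMap.comp_apply, LinearEquiv.coe_coe, Submodule.coe_subtype]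
      have h := hinternal.ofBijective_coeLinearMap_of_mem (i := i) hx
      rw [show DirectSum.component k ℕ (fun i => ↥(ℬ i)) i
          ((LinearEquiv.ofBijective (DirectSum.coeLinearMap ℬ) hinternal).symm x)
        = ((LinearEquiv.ofBijective (DirectSum.coeLinearMap ℬ) hinternal).symm x) i from rfl, h]
    · intro i j x hx hij
      simp only [LinearMap.comp_apply, LinearEquiv.coe_coe, Submodule.coe_subtype]
      have h := hinternal.ofBijective_coeLinearMap_of_mem_ne (i := i) (j := j) hij hx
      rw [show DirectSum.component k ℕ (fun i => ↥(ℬ i)) j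
          ((LinearEquiv.ofBijective (DirectSum.coeLinearMap ℬ) hinternal).symm x)
        = ((LinearEquiv.ofBijective (DirectSum.coeLinearMap ℬ) hinternal).symm x) j from rfl, h]
      rfl
  -- package the convolution-type map
  obtain ⟨Ψ, hΨt, hΨrec⟩ : ∃ Ψ : H ⊗[k] H →ₗ[k] K,
      (∀ a b : H, Ψ (a ⊗ₜ[k] b) = φm a * φ b) ∧
      (∀ x : H, Coalgebra.counit (R := k) x = 0 →
        φm x = -T (φ x + Ψ (Coalgebra.comul (R := k) x - x ⊗ₜ[k] (1 : H)
          - (1 : H) ⊗ₜ[k] x))) :=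
    ⟨LinearMap.mul' k K ∘ₗ TensorProduct.map φm φ.toLinearMap,
     fun a b => by simp [LinearMap.mul'_apply],
     fun x hx => hrec x (LinearMap.mem_ker.mpr hx)⟩
  have hstruct := aux_struct ℬ hconn hgraded compo hcm hcn htriv
  have key := aux_key ℬ hconn T hRB φ φm hφm1 Ψ hΨt hΨrec hstruct
  have htop : ∀ z : H, z ∈ ⨆ i, ℬ i := by
    intro z
    rw [hinternal.submodule_iSup_eq_top]
    exact Submodule.mem_top
  constructor
  · -- multiplicativity for general elements
    intro x y
    have step1 : ∀ q (y' : H), y' ∈ ℬ q → ∀ x', φm (x' * y') = φm x' * φm y' := by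
      intro q y' hy' x'
      refine Submodule.iSup_induction ℬ (motive := fun x' => φm (x' * y') = φm x' * φm y')
        (htop x') ?_ (by simp) ?_
      · intro p x'' hx''
        exact key (p + q) p q x'' y' rfl hx'' hy'
      · intro a b ha hb
        rw [add_mul, map_add, map_add, ha, hb, add_mul]
    refine Submodule.iSup_induction ℬ (motive := fun y => φm (x * y) = φm x * φm y)
      (htop y) ?_ (by simp) ?_
    · intro q y' hy'
      exact step1 q y' hy' x
    · intro a b ha hb
      rw [mul_add, map_add, map_add, ha, hb, mul_add]
  · -- values lie in k·1 + K₋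
    intro x
    have hεs : Coalgebra.counit (R := k) (x - Coalgebra.counit (R := k) x • (1:H)) = 0 := by
      rw [map_sub, map_smul, Bialgebra.counit_one, smul_eq_mul, mul_one, sub_self]
    have hdecomp : φm x = Coalgebra.counit (R := k) x • (1:K)
        + φm (x - Coalgebra.counit (R := k) x • (1:H)) := by
      rw [map_sub, map_smul, hφm1]
      abel
    rw [hdecomp]
    refine Submodule.add_mem _ (Submodule.mem_sup_left ?_) (Submodule.mem_sup_right ?_)
    · exact Submodule.smul_mem _ _ (Submodule.mem_span_singleton_self _)
    · rw [hΨrec _ hεs]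
      exact Submodule.neg_mem _ (LinearMap.mem_range_self T _)
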